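/- For every f ∈ Pol_n the polynomial s̃_k f − s_k f is divisible by y_k − y_{k+1}, so that ∂_k f := (s̃_k f − s_k f)/(y_k − y_{k+1}) defines a K-linear operator ∂_k on Pol_n; moreover the assignment x_k ↦ (multiplication by x_k) and τ_k ↦ ∂_k extends (uniquely) to a K-algebra homomorphism R_n → End_K(Pol_n), i.e. Pol_n is a left R_n-module with each x_k acting by multiplication and each τ_k acting by ∂_k. -/
import Mathlib


namespace QH1

/-- Generators of the algebra `Rₙ` attached to a single imaginary index:
dots `x k` and crossings `t k`. -/
inductive Gen (n : ℕ) : Type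
  | x (k : Fin n)
  | t (k : Fin (n - 1))

/-- Position `k` viewed in `Fin n`. -/
def pc {n : ℕ} (k : Fin (n - 1)) : Fin n := ⟨k.1, by have := k.2; omega⟩

/-- Position `k+1` viewed in `Fin n`. -/
def ps {n : ℕ} (k : Fin (n - 1)) : Fin n := ⟨k.1 + 1, by have := k.2; omega⟩

variable (K : Type) [Field K]

/-- The free algebra on the generators. -/
abbrev F (n : ℕ) : Type := FreeAlgebra K (Gen n)

def gx {n : ℕ} (k : Fin n) : F K n := FreeAlgebra.ι K (Gen.x k)
def gt {n : ℕ} (k : Fin (n - 1)) : F K n := FreeAlgebra.ι K (Gen.t k)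

/-- The defining relations of `Rₙ` (single imaginary index in `I⁻`). -/
inductive Rel (n : ℕ) : F K n → F K n → Prop
  | xx (k t : Fin n) : Rel n (gx K k * gx K t) (gx K t * gx K k)
  | tsq (k : Fin (n - 1)) : Rel n (gt K k * gt K k) 0
  | braid (k k' : Fin (n - 1)) (h : k'.1 = k.1 + 1) :
      Rel n (gt K k * gt K k' * gt K k) (gt K k' * gt K k * gt K k')
  | ttfar (k t : Fin (n - 1)) (h : k.1 + 1 < t.1 ∨ t.1 + 1 < k.1) :
      Rel n (gt K k * gt K t) (gt K t * gt K k)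
  | xt (k : Fin (n - 1)) : Rel n (gx K (pc k) * gt K k) (gt K k * gx K (ps k))
  | tx (k : Fin (n - 1)) : Rel n (gt K k * gx K (pc k)) (gx K (ps k) * gt K k)
  | txfar (k : Fin (n - 1)) (t : Fin n) (h1 : t ≠ pc k) (h2 : t ≠ ps k) :
      Rel n (gt K k * gx K t) (gx K t * gt K k)

/-- The algebra `Rₙ = R(n·i)` for a single imaginary index `i ∈ I⁻`. -/
abbrev Rn (n : ℕ) : Type := RingQuot (Rel K n)

/-- The dot generators of `Rₙ`. -/
def X {n : ℕ} (k : Fin n) : Rn K n := RingQuot.mkAlgHom K (Rel K n) (gx K k)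

/-- The crossing generators of `Rₙ`. -/
def T {n : ℕ} (k : Fin (n - 1)) : Rn K n := RingQuot.mkAlgHom K (Rel K n) (gt K k)

/-- The simple transposition `s_k` of `{1, …, n}`. -/
def sPerm {n : ℕ} (k : Fin (n - 1)) : Equiv.Perm (Fin n) := Equiv.swap (pc k) (ps k)

/-- `l` is a reduced word for the permutation `ω`. -/
def IsRedWord {n : ℕ} (ω : Equiv.Perm (Fin n)) (l : List (Fin (n - 1))) : Prop :=
  (l.map sPerm).prod = ω ∧ ∀ l' : List (Fin (n - 1)), (l'.map sPerm).prod = ω → l.length ≤ l'.length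

/-- `τ_ω`: the product of crossings along a word. -/
def tprod {n : ℕ} (l : List (Fin (n - 1))) : Rn K n := (l.map (T K)).prod

end QH1

namespace QH1

/-- The polynomial ring `Pol_n = K[x₁,…,xₙ,y₁,…,yₙ]`; `Sum.inl` indexes the `x`'s
and `Sum.inr` indexes the `y`'s. -/
abbrev Pol (K : Type) [Field K] (n : ℕ) : Type := MvPolynomial (Fin n ⊕ Fin n) K

variable (K : Type) [Field K]

/-- The automorphism `s̃_k` of `Pol_n` exchanging `x_k ↔ x_{k+1}`. -/
noncomputable def sTil {n : ℕ} (k : Fin (n - 1)) (f : Pol K n) : Pol K n :=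
  MvPolynomial.rename (Equiv.sumCongr (Equiv.swap (pc k) (ps k)) (Equiv.refl (Fin n))) f

/-- The automorphism `s_k` of `Pol_n` exchanging `x_k ↔ x_{k+1}` and `y_k ↔ y_{k+1}`. -/
noncomputable def sAct {n : ℕ} (k : Fin (n - 1)) (f : Pol K n) : Pol K n :=
  MvPolynomial.rename (Equiv.sumCongr (Equiv.swap (pc k) (ps k)) (Equiv.swap (pc k) (ps k))) f

/-- The variable `y_t`. -/
noncomputable def Yv {n : ℕ} (t : Fin n) : Pol K n := MvPolynomial.X (Sum.inr t)

/-- The variable `x_t`. -/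
noncomputable def Xv {n : ℕ} (t : Fin n) : Pol K n := MvPolynomial.X (Sum.inl t)

end QH1


namespace QH1
namespace Aux

open MvPolynomial Equiv

variable (K : Type) [Field K] {n : ℕ}

/-- rename along a pair of permutations. -/
noncomputable def Wr (a b : Equiv.Perm (Fin n)) : Pol K n →ₐ[K] Pol K n :=
  MvPolynomial.rename (Equiv.sumCongr a b)

lemma Wr_Wr (a b a' b' : Equiv.Perm (Fin n)) (f : Pol K n) :
    Wr K a b (Wr K a' b' f) = Wr K (a'.trans a) (b'.trans b) f := by
  simp only [Wr, rename_rename]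
  rw [← Equiv.sumCongr_trans, Equiv.coe_trans]

lemma Wr_X (a b : Equiv.Perm (Fin n)) (t : Fin n) :
    Wr K a b (Xv K t) = Xv K (a t) := by
  simp [Wr, Xv, rename_X]

lemma Wr_Y (a b : Equiv.Perm (Fin n)) (t : Fin n) :
    Wr K a b (Yv K t) = Yv K (b t) := by
  simp [Wr, Yv, rename_X]

/-- The simple transposition as a permutation of `Fin n`. -/
def sw (k : Fin (n - 1)) : Equiv.Perm (Fin n) := Equiv.swap (pc k) (ps k)

lemma sTil_eq (k : Fin (n - 1)) (f : Pol K n) :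
    sTil K k f = Wr K (sw k) (Equiv.refl (Fin n)) f := rfl

lemma sAct_eq (k : Fin (n - 1)) (f : Pol K n) :
    sAct K k f = Wr K (sw k) (sw k) f := rfl

/-- `c_k = y_k - y_{k+1}`. -/
noncomputable def cp (k : Fin (n - 1)) : Pol K n := Yv K (pc k) - Yv K (ps k)

lemma pc_ne_ps (k : Fin (n - 1)) : pc k ≠ ps k := by
  intro h
  have := congrArg Fin.val h
  simp [pc, ps] at this

lemma Yv_sub_ne {a b : Fin n} (h : a ≠ b) : Yv K a - Yv K b ≠ 0 := by
  rw [sub_ne_zero]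
  intro hh
  exact h (Sum.inr_injective (MvPolynomial.X_injective hh))

lemma cp_ne (k : Fin (n - 1)) : cp K k ≠ 0 := Yv_sub_ne K (pc_ne_ps k)

lemma dvd_main (k : Fin (n - 1)) (f : Pol K n) :
    cp K k ∣ (sTil K k f - sAct K k f) := by
  induction f using MvPolynomial.induction_on with
  | C a => simp [sTil, sAct]
  | add p q hp hq =>
    have : sTil K k (p + q) - sAct K k (p + q)
        = (sTil K k p - sAct K k p) + (sTil K k q - sAct K k q) := by
      simp only [sTil, sAct, map_add]; ring
    rw [this]; exact dvd_add hp hq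
  | mul_X p v hp =>
    have hsplit : sTil K k (p * MvPolynomial.X v) - sAct K k (p * MvPolynomial.X v)
        = sTil K k p * (sTil K k (MvPolynomial.X v) - sAct K k (MvPolynomial.X v))
          + (sTil K k p - sAct K k p) * sAct K k (MvPolynomial.X v) := by
      simp only [sTil, sAct, map_mul]; ring
    rw [hsplit]
    refine dvd_add (Dvd.dvd.mul_left ?_ _) (hp.mul_right _)
    cases v with
    | inl t =>
      simp only [sTil, sAct, rename_X, Equiv.sumCongr_apply, Sum.map_inl, sub_self]
      exact dvd_zero _
    | inr t =>
      simp only [sTil, sAct, rename_X, Equiv.sumCongr_apply, Sum.map_inr, Equiv.refl_apply]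
      rcases eq_or_ne t (pc k) with rfl | h0
      · rw [Equiv.swap_apply_left]; exact dvd_refl _
      rcases eq_or_ne t (ps k) with rfl | h1
      · rw [Equiv.swap_apply_right]
        have : (MvPolynomial.X (Sum.inr (ps k)) - MvPolynomial.X (Sum.inr (pc k)) : Pol K n)
            = -(cp K k) := by simp only [cp, Yv]; ring
        rw [this]; exact (dvd_neg).2 dvd_rfl
      · rw [Equiv.swap_apply_of_ne_of_ne h0 h1, sub_self]
        exact dvd_zero _

/-- The divided-difference operator, as a bare function. -/
noncomputable def Dd (k : Fin (n - 1)) (f : Pol K n) : Pol K n :=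
  (dvd_main K k f).choose

lemma hDd (k : Fin (n - 1)) (f : Pol K n) :
    cp K k * Dd K k f = sTil K k f - sAct K k f :=
  ((dvd_main K k f).choose_spec).symm

lemma hW (k : Fin (n - 1)) (f : Pol K n) :
    cp K k * Dd K k f = Wr K (sw k) (Equiv.refl (Fin n)) f - Wr K (sw k) (sw k) f :=
  hDd K k f

lemma cancel {p : Pol K n} (hp : p ≠ 0) {a b : Pol K n} (h : p * a = p * b) : a = b :=
  mul_left_cancel₀ hp h

lemma Wr_cp (a b : Equiv.Perm (Fin n)) (k : Fin (n - 1)) :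
    Wr K a b (cp K k) = Yv K (b (pc k)) - Yv K (b (ps k)) := by
  simp [cp, map_sub, Wr_Y]

/-- The image of the defining identity of `Dd` under a rename. -/
lemma hW_ap (k : Fin (n - 1)) (a b : Equiv.Perm (Fin n)) (g : Pol K n) :
    (Yv K (b (pc k)) - Yv K (b (ps k))) * Wr K a b (Dd K k g)
      = Wr K ((sw k).trans a) b g - Wr K ((sw k).trans a) ((sw k).trans b) g := by
  have h := congrArg (Wr K a b) (hW K k g)
  rw [map_mul, map_sub, Wr_Wr, Wr_Wr, Wr_cp, Equiv.refl_trans] at h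
  exact h


/-- The divided-difference operator as a linear endomorphism. -/
noncomputable def DD (k : Fin (n - 1)) : Module.End K (Pol K n) where
  toFun := Dd K k
  map_add' f g := by
    refine cancel K (cp_ne K k) ?_
    rw [hDd, mul_add, hDd, hDd]
    simp only [sTil, sAct, map_add]
    ring
  map_smul' c f := by
    refine cancel K (cp_ne K k) ?_
    rw [RingHom.id_apply, hDd, mul_smul_comm, hDd]
    simp only [sTil, sAct, map_smul, smul_sub]

@[simp] lemma DD_apply (k : Fin (n - 1)) (f : Pol K n) : DD K k f = Dd K k f := rfl

/-- Multiplication by `x_k` as a linear endomorphism. -/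
noncomputable def MX (k : Fin n) : Module.End K (Pol K n) := LinearMap.mulLeft K (Xv K k)

@[simp] lemma MX_apply (k : Fin n) (f : Pol K n) : MX K k f = Xv K k * f := rfl

/-- The candidate representation on the free algebra. -/
noncomputable def rho0 {n : ℕ} : F K n →ₐ[K] Module.End K (Pol K n) :=
  FreeAlgebra.lift K (fun g => match g with
    | Gen.x t => MX K t
    | Gen.t t => DD K t)

@[simp] lemma rho0_x (t : Fin n) : rho0 K (gx K t) = MX K t := by
  simp [rho0, gx, FreeAlgebra.lift_ι_apply]

@[simp] lemma rho0_t (t : Fin (n - 1)) : rho0 K (gt K t) = DD K t := by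
  simp [rho0, gt, FreeAlgebra.lift_ι_apply]

lemma sw_pc (k : Fin (n - 1)) : sw k (pc k) = ps k := Equiv.swap_apply_left _ _
lemma sw_ps (k : Fin (n - 1)) : sw k (ps k) = pc k := Equiv.swap_apply_right _ _
lemma sw_other (k : Fin (n - 1)) {t : Fin n} (h1 : t ≠ pc k) (h2 : t ≠ ps k) :
    sw k t = t := Equiv.swap_apply_of_ne_of_ne h1 h2
lemma sw_sw (k : Fin (n - 1)) : (sw k).trans (sw k) = Equiv.refl (Fin n) :=
  Equiv.swap_swap _ _

lemma fin_ne {a b : Fin n} (h : a.1 ≠ b.1) : a ≠ b := fun hh => h (congrArg Fin.val hh)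


lemma rho0_rel {x y : F K n} (h : Rel K n x y) : rho0 K x = rho0 K y := by
  cases h with
  | xx k t =>
    simp only [map_mul, rho0_x]
    refine LinearMap.ext fun f => ?_
    simp only [Module.End.mul_apply, MX_apply]
    ring
  | tsq k =>
    rw [map_mul, map_zero, rho0_t]
    refine LinearMap.ext fun f => ?_
    rw [Module.End.mul_apply, DD_apply, DD_apply, LinearMap.zero_apply]
    have hK := hW K k (Dd K k f)
    have C1 := hW_ap K k (sw k) (Equiv.refl (Fin n)) f
    rw [sw_sw, Equiv.trans_refl, Equiv.refl_apply, Equiv.refl_apply] at C1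
    have C2 := hW_ap K k (sw k) (sw k) f
    rw [sw_sw, sw_pc, sw_ps] at C2
    refine cancel K (mul_ne_zero (cp_ne K k) (cp_ne K k)) ?_
    simp only [cp] at hK C1 C2 ⊢
    linear_combination (Yv K (pc k) - Yv K (ps k)) * hK + C1 + C2
  | xt k =>
    simp only [map_mul, rho0_x, rho0_t]
    refine LinearMap.ext fun f => ?_
    simp only [Module.End.mul_apply, MX_apply, DD_apply]
    -- goal : Xv (pc k) * Dd k f = Dd k (Xv (ps k) * f)
    have h1 := hW K k (Xv K (ps k) * f)
    rw [map_mul, map_mul, Wr_X, Wr_X, sw_ps] at h1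
    have h0 := hW K k f
    refine cancel K (cp_ne K k) ?_
    simp only [cp] at h0 h1 ⊢
    linear_combination (Xv K (pc k)) * h0 - h1
  | tx k =>
    simp only [map_mul, rho0_x, rho0_t]
    refine LinearMap.ext fun f => ?_
    simp only [Module.End.mul_apply, MX_apply, DD_apply]
    -- goal : Dd k (Xv (pc k) * f) = Xv (ps k) * Dd k f
    have h1 := hW K k (Xv K (pc k) * f)
    rw [map_mul, map_mul, Wr_X, Wr_X, sw_pc] at h1
    have h0 := hW K k f
    refine cancel K (cp_ne K k) ?_
    simp only [cp] at h0 h1 ⊢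
    linear_combination h1 - (Xv K (ps k)) * h0
  | txfar k t h1 h2 =>
    simp only [map_mul, rho0_x, rho0_t]
    refine LinearMap.ext fun f => ?_
    simp only [Module.End.mul_apply, MX_apply, DD_apply]
    have hh := hW K k (Xv K t * f)
    rw [map_mul, map_mul, Wr_X, Wr_X, sw_other k h1 h2] at hh
    have h0 := hW K k f
    refine cancel K (cp_ne K k) ?_
    simp only [cp] at h0 hh ⊢
    linear_combination hh - (Xv K t) * h0
  | ttfar k t hfar =>
    simp only [map_mul, rho0_t]
    refine LinearMap.ext fun f => ?_
    simp only [Module.End.mul_apply, DD_apply]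
    -- distinctness of the four points
    have e1 : sw t (pc k) = pc k := by
      refine sw_other t (fin_ne ?_) (fin_ne ?_) <;> simp only [pc, ps] <;> omega
    have e2 : sw t (ps k) = ps k := by
      refine sw_other t (fin_ne ?_) (fin_ne ?_) <;> simp only [pc, ps] <;> omega
    have e3 : sw k (pc t) = pc t := by
      refine sw_other k (fin_ne ?_) (fin_ne ?_) <;> simp only [pc, ps] <;> omega
    have e4 : sw k (ps t) = ps t := by
      refine sw_other k (fin_ne ?_) (fin_ne ?_) <;> simp only [pc, ps] <;> omega
    have hcomm : (sw t).trans (sw k) = (sw k).trans (sw t) := by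
      refine Equiv.ext fun z => ?_
      simp only [Equiv.trans_apply]
      rcases eq_or_ne z (pc k) with rfl | hz0
      · rw [e1, sw_pc, e2]
      rcases eq_or_ne z (ps k) with rfl | hz1
      · rw [e2, sw_ps, e1]
      rcases eq_or_ne z (pc t) with rfl | hz2
      · rw [e3, sw_pc t, e4]
      rcases eq_or_ne z (ps t) with rfl | hz3
      · rw [e4, sw_ps t, e3]
      · rw [sw_other k hz0 hz1, sw_other t hz2 hz3]; exact sw_other k hz0 hz1
    have Hk := hW K t (Dd K k f)
    have Ht := hW K k (Dd K t f)
    have C1 := hW_ap K t (sw k) (Equiv.refl (Fin n)) f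
    rw [Equiv.trans_refl, Equiv.refl_apply, Equiv.refl_apply, hcomm] at C1
    have C2 := hW_ap K t (sw k) (sw k) f
    rw [hcomm, e3, e4] at C2
    have C3 := hW_ap K k (sw t) (Equiv.refl (Fin n)) f
    rw [Equiv.trans_refl, Equiv.refl_apply, Equiv.refl_apply] at C3
    have C4 := hW_ap K k (sw t) (sw t) f
    rw [e1, e2] at C4
    refine cancel K (mul_ne_zero (cp_ne K k) (cp_ne K t)) ?_
    simp only [cp] at Hk Ht C1 C2 C3 C4 ⊢
    linear_combination (Yv K (pc t) - Yv K (ps t)) * Ht + C1 - C2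
      - ((Yv K (pc k) - Yv K (ps k)) * Hk + C3 - C4)
  | braid k k' hkk' =>
    simp only [map_mul, rho0_t]
    refine LinearMap.ext fun f => ?_
    simp only [Module.End.mul_apply, DD_apply]
    -- points
    have hpp : ps k = pc k' := Fin.ext (by simp only [pc, ps, hkk'])
    have h01 : (pc k : Fin n) ≠ ps k := pc_ne_ps k
    have h02 : (pc k : Fin n) ≠ ps k' := fin_ne (by simp only [pc, ps]; omega)
    have h12 : (ps k : Fin n) ≠ ps k' := fin_ne (by simp only [pc, ps]; omega)
    -- evaluations
    have e1pc : sw k (pc k) = ps k := sw_pc k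
    have e1ps : sw k (ps k) = pc k := sw_ps k
    have e1q : sw k (ps k') = ps k' := sw_other k (Ne.symm h02) (Ne.symm h12)
    have e2pc : sw k' (pc k) = pc k := by
      refine sw_other k' ?_ ?_
      · rw [← hpp]; exact h01
      · exact h02
    have e2ps : sw k' (ps k) = ps k' := by rw [hpp]; exact sw_pc k'
    have e2q : sw k' (ps k') = ps k := by rw [hpp]; exact sw_ps k'
    -- braid identities for the swaps
    set u : Equiv.Perm (Fin n) := Equiv.swap (pc k) (ps k') with hu
    have hs1inv : (sw k)⁻¹ = sw k := Equiv.swap_inv _ _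
    have hs1sq : sw k * sw k = 1 := Equiv.swap_mul_self _ _
    have hs2sq : sw k' * sw k' = 1 := Equiv.swap_mul_self _ _
    have hswap2 : sw k' = sw k * u * (sw k)⁻¹ := by
      have h := Equiv.swap_apply_apply (sw k) (pc k) (ps k')
      rw [e1pc, e1q] at h
      rw [show sw k' = Equiv.swap (ps k) (ps k') by rw [sw, ← hpp]]
      exact h
    have hmul1 : sw k * sw k' * sw k = u := by
      rw [hswap2, hs1inv]
      calc sw k * (sw k * u * sw k) * sw k = (sw k * sw k) * u * (sw k * sw k) := by group
        _ = u := by rw [hs1sq, one_mul, mul_one]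
    have hs2inv : (sw k')⁻¹ = sw k' := Equiv.swap_inv _ _
    have hswap1 : sw k = sw k' * u * (sw k')⁻¹ := by
      have h := Equiv.swap_apply_apply (sw k') (pc k) (ps k')
      rw [e2pc, e2q] at h
      exact h
    have hmul2 : sw k' * sw k * sw k' = u := by
      rw [hswap1, hs2inv]
      calc sw k' * (sw k' * u * sw k') * sw k' = (sw k' * sw k') * u * (sw k' * sw k') := by group
        _ = u := by rw [hs2sq, one_mul, mul_one]
    simp only [Equiv.Perm.mul_def] at hmul1 hmul2
    have e1pc' : sw k (pc k') = pc k := by rw [← hpp]; exact e1ps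
    -- hypotheses
    have H5 := hW K k (Dd K k' (Dd K k f))
    have H6 := hW K k' (Dd K k (Dd K k' f))
    have A3 := hW_ap K k' (sw k) (Equiv.refl (Fin n)) (Dd K k f)
    rw [Equiv.trans_refl, Equiv.refl_apply, Equiv.refl_apply, ← hpp] at A3
    have A4 := hW_ap K k' (sw k) (sw k) (Dd K k f)
    rw [e1pc', e1q] at A4
    have A5 := hW_ap K k ((sw k').trans (sw k)) (Equiv.refl (Fin n)) f
    rw [hmul1, Equiv.trans_refl, Equiv.refl_apply, Equiv.refl_apply] at A5
    have A6 := hW_ap K k ((sw k').trans (sw k)) (sw k') f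
    rw [hmul1, e2pc, e2ps] at A6
    have A7 := hW_ap K k ((sw k').trans (sw k)) (sw k) f
    rw [hmul1, e1pc, e1ps, sw_sw] at A7
    have A8 := hW_ap K k ((sw k').trans (sw k)) ((sw k').trans (sw k)) f
    rw [hmul1] at A8
    simp only [Equiv.trans_apply] at A8
    rw [e2pc, e1pc, e2ps, e1q] at A8
    have B3 := hW_ap K k (sw k') (Equiv.refl (Fin n)) (Dd K k' f)
    rw [Equiv.trans_refl, Equiv.refl_apply, Equiv.refl_apply] at B3
    have B4 := hW_ap K k (sw k') (sw k') (Dd K k' f)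
    rw [e2pc, e2ps] at B4
    have B5 := hW_ap K k' ((sw k).trans (sw k')) (Equiv.refl (Fin n)) f
    rw [hmul2, Equiv.trans_refl, Equiv.refl_apply, Equiv.refl_apply, ← hpp] at B5
    have B6 := hW_ap K k' ((sw k).trans (sw k')) (sw k) f
    rw [hmul2, e1pc', e1q] at B6
    have B7 := hW_ap K k' ((sw k).trans (sw k')) (sw k') f
    rw [hmul2, sw_pc k', e2q, sw_sw] at B7
    have B8 := hW_ap K k' ((sw k).trans (sw k')) ((sw k).trans (sw k')) f
    rw [hmul2] at B8
    simp only [Equiv.trans_apply] at B8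
    rw [e1pc', e2pc, e1q, e2q] at B8
    simp only [cp, ← hpp] at H5 H6
    have hM : ((Yv K (pc k) - Yv K (ps k)) * (Yv K (pc k) - Yv K (ps k))
        * ((Yv K (ps k) - Yv K (ps k')) * (Yv K (ps k) - Yv K (ps k')))
        * (Yv K (pc k) - Yv K (ps k')) : Pol K n) ≠ 0 :=
      mul_ne_zero (mul_ne_zero (mul_ne_zero (Yv_sub_ne K h01) (Yv_sub_ne K h01))
        (mul_ne_zero (Yv_sub_ne K h12) (Yv_sub_ne K h12))) (Yv_sub_ne K h02)
    refine cancel K hM ?_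
    linear_combination
      ((Yv K (pc k) - Yv K (ps k)) * (Yv K (ps k) - Yv K (ps k'))^2
        * (Yv K (pc k) - Yv K (ps k'))) * H5
      + ((Yv K (pc k) - Yv K (ps k)) * (Yv K (ps k) - Yv K (ps k'))
        * (Yv K (pc k) - Yv K (ps k'))) * A3
      - ((Yv K (pc k) - Yv K (ps k)) * (Yv K (ps k) - Yv K (ps k'))^2) * A4
      + ((Yv K (ps k) - Yv K (ps k')) * (Yv K (pc k) - Yv K (ps k'))) * A5
      - ((Yv K (pc k) - Yv K (ps k)) * (Yv K (ps k) - Yv K (ps k'))) * A6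
      + ((Yv K (ps k) - Yv K (ps k'))^2) * A7
      + ((Yv K (pc k) - Yv K (ps k)) * (Yv K (ps k) - Yv K (ps k'))) * A8
      - ((Yv K (pc k) - Yv K (ps k))^2 * (Yv K (ps k) - Yv K (ps k'))
        * (Yv K (pc k) - Yv K (ps k'))) * H6
      - ((Yv K (pc k) - Yv K (ps k)) * (Yv K (ps k) - Yv K (ps k'))
        * (Yv K (pc k) - Yv K (ps k'))) * B3
      + ((Yv K (pc k) - Yv K (ps k))^2 * (Yv K (ps k) - Yv K (ps k'))) * B4
      - ((Yv K (pc k) - Yv K (ps k)) * (Yv K (pc k) - Yv K (ps k'))) * B5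
      + ((Yv K (pc k) - Yv K (ps k)) * (Yv K (ps k) - Yv K (ps k'))) * B6
      - ((Yv K (pc k) - Yv K (ps k))^2) * B7
      - ((Yv K (pc k) - Yv K (ps k)) * (Yv K (ps k) - Yv K (ps k'))) * B8


/-- The representation on `Rₙ`. -/
noncomputable def rho {n : ℕ} : Rn K n →ₐ[K] Module.End K (Pol K n) :=
  RingQuot.liftAlgHom K ⟨rho0 K, fun _ _ h => rho0_rel K h⟩

lemma rho_X (k : Fin n) : rho K (X K k) = MX K k := by
  rw [rho, X, RingQuot.liftAlgHom_mkAlgHom_apply]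
  exact rho0_x K k

lemma rho_T (k : Fin (n - 1)) : rho K (T K k) = DD K k := by
  rw [rho, T, RingQuot.liftAlgHom_mkAlgHom_apply]
  exact rho0_t K k

end Aux
end QH1

open QH1 in
/-- for every `f ∈ Pol_n` the polynomial `s̃_k f − s_k f` is divisible by
`y_k − y_{k+1}`, so the divided difference `∂_k` is a well-defined `K`-linear operator;
moreover `x_k ↦ (mult. by x_k)`, `τ_k ↦ ∂_k` extends uniquely to an algebra homomorphism
`R_n → End_K(Pol_n)`, making `Pol_n` a left `R_n`-module. -/
theorem statement1 (K : Type) [Field K] [IsAlgClosed K] (n : ℕ) (hn : 1 ≤ n)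
    (r : ℕ) (hr : 0 < r) (a : ℤ) (ha : a ≤ 0) (ha2 : Even a) :
    (∀ (k : Fin (n - 1)) (f : Pol K n),
      (Yv K (pc k) - Yv K (ps k)) ∣ (sTil K k f - sAct K k f)) ∧
    ∃! ρ : Rn K n →ₐ[K] Module.End K (Pol K n),
      (∀ (k : Fin n) (f : Pol K n), ρ (X K k) f = Xv K k * f) ∧
      (∀ (k : Fin (n - 1)) (f : Pol K n),
        (Yv K (pc k) - Yv K (ps k)) * (ρ (T K k) f) = sTil K k f - sAct K k f) := by
  constructor
  · intro k f
    have h := Aux.dvd_main K k f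
    rwa [Aux.cp] at h
  · refine ⟨Aux.rho K, ⟨?_, ?_⟩, ?_⟩
    · intro k f
      rw [Aux.rho_X]
      rfl
    · intro k f
      rw [Aux.rho_T]
      have h := Aux.hDd K k f
      rwa [Aux.cp] at h
    · rintro ρ' ⟨hp1, hp2⟩
      have keyX : ∀ t : Fin n, ρ' (X K t) = Aux.rho K (X K t) := by
        intro t
        refine LinearMap.ext fun f => ?_
        rw [hp1, Aux.rho_X]
        rfl
      have keyT : ∀ t : Fin (n - 1), ρ' (T K t) = Aux.rho K (T K t) := by
        intro t
        refine LinearMap.ext fun f => ?_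
        refine Aux.cancel K (Aux.cp_ne K t) ?_
        have h1 := hp2 t f
        have h2 := Aux.hDd K t f
        rw [Aux.cp] at h2
        rw [Aux.cp, Aux.rho_T, Aux.DD_apply, h1, h2]
      refine RingQuot.ringQuot_ext' K ρ' (Aux.rho K) ?_
      refine FreeAlgebra.hom_ext ?_
      funext g
      cases g with
      | x t =>
        show ρ' (RingQuot.mkAlgHom K (Rel K n) (FreeAlgebra.ι K (Gen.x t)))
          = Aux.rho K (RingQuot.mkAlgHom K (Rel K n) (FreeAlgebra.ι K (Gen.x t)))
        exact keyX t
      | t t =>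
        show ρ' (RingQuot.mkAlgHom K (Rel K n) (FreeAlgebra.ι K (Gen.t t)))
          = Aux.rho K (RingQuot.mkAlgHom K (Rel K n) (FreeAlgebra.ι K (Gen.t t)))
        exact keyT t
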